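/- Suppose w₊, w₋ : [0,1] → [0,1] are probability weighting functions with w₊(0)=w₋(0)=0, both differentiable on (0,1), u₊(1), u₋(1) > 0, and λ > 0. If lim_{p→0⁺} w₊'(p)/w₋'(p) > λ·u₋(1)/u₊(1), then there exists q ∈ (0, 1/2] such that u₊(1)·w₊(q) − λ·u₋(1)·w₋(q) > 0. -/

import Mathlib

open Filter Set

lemma deriv_nonneg_of_monotoneOn {f : ℝ → ℝ} {x : ℝ} (hx : x ∈ Ioo (0:ℝ) 1)
    (hmono : MonotoneOn f (Icc 0 1)) (hdiff : DifferentiableAt ℝ f x) :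
    0 ≤ deriv f x := by
  have hd : Tendsto (slope f x) (nhdsWithin x {x}ᶜ) (nhds (deriv f x)) :=
    hasDerivAt_iff_tendsto_slope.mp hdiff.hasDerivAt
  have hle : nhdsWithin x (Ioo x 1) ≤ nhdsWithin x {x}ᶜ := by
    apply nhdsWithin_mono
    intro y hy
    exact (ne_of_gt hy.1)
  have hne : (nhdsWithin x (Ioo x 1)).NeBot := by
    apply mem_closure_iff_nhdsWithin_neBot.mp
    rw [closure_Ioo (ne_of_lt hx.2)]
    exact ⟨le_rfl, le_of_lt hx.2⟩
  refine ge_of_tendsto (hd.mono_left hle) ?_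
  filter_upwards [self_mem_nhdsWithin] with y hy
  have hxy : x < y := hy.1
  have h1 : f x ≤ f y := hmono ⟨le_of_lt hx.1, le_of_lt hx.2⟩
    ⟨le_trans (le_of_lt hx.1) (le_of_lt hxy), le_of_lt hy.2⟩ (le_of_lt hxy)
  have : 0 < y - x := by linarith
  rw [slope_def_field]
  apply div_nonneg <;> simp only [sub_nonneg] <;> linarith

/-- If the ratio of marginal probability weightings at 0 exceeds the loss-aversion-adjusted
utility ratio, then some randomized one-shot strategy has a strictly positive CPT value. -/
theorem stmt15 (wp wm : ℝ → ℝ) (up1 um1 lam : ℝ)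
    (hwp_map : ∀ p ∈ Icc (0:ℝ) 1, wp p ∈ Icc (0:ℝ) 1)
    (hwm_map : ∀ p ∈ Icc (0:ℝ) 1, wm p ∈ Icc (0:ℝ) 1)
    (hwp0 : wp 0 = 0) (hwm0 : wm 0 = 0)
    (hwp_mono : MonotoneOn wp (Icc 0 1)) (hwm_mono : MonotoneOn wm (Icc 0 1))
    (hwp_cont : ContinuousOn wp (Icc 0 1)) (hwm_cont : ContinuousOn wm (Icc 0 1))
    (hwp_diff : ∀ p ∈ Ioo (0:ℝ) 1, DifferentiableAt ℝ wp p)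
    (hwm_diff : ∀ p ∈ Ioo (0:ℝ) 1, DifferentiableAt ℝ wm p)
    (hup : 0 < up1) (hum : 0 < um1) (hlam : 0 < lam)
    (hlim : ∃ c : ℝ, lam * um1 / up1 < c ∧
      ∀ᶠ p in nhdsWithin (0:ℝ) (Ioi 0), c ≤ deriv wp p / deriv wm p) :
    ∃ q ∈ Ioc (0:ℝ) (1/2), 0 < up1 * wp q - lam * um1 * wm q := by
  obtain ⟨c, hc, hev⟩ := hlim
  have hc0 : 0 < c := lt_trans (by positivity) hc
  rw [eventually_nhdsWithin_iff, Metric.eventually_nhds_iff] at hev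
  obtain ⟨δ, hδ0, hδ⟩ := hev
  set q := min (δ/2) (1/2) with hqdef
  have hq0 : 0 < q := lt_min (by linarith) (by norm_num)
  have hq2 : q ≤ 1/2 := min_le_right _ _
  have hq1 : q < 1 := lt_of_le_of_lt hq2 (by norm_num)
  refine ⟨q, ⟨hq0, hq2⟩, ?_⟩
  have hsub : Icc (0:ℝ) q ⊆ Icc 0 1 := Icc_subset_Icc le_rfl (le_of_lt hq1)
  set f : ℝ → ℝ := fun p => up1 * wp p - lam * um1 * wm p with hf
  have key : StrictMonoOn f (Icc 0 q) := by
    apply strictMonoOn_of_deriv_pos (convex_Icc 0 q)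
    · exact (((hwp_cont.mono hsub).const_smul up1).sub
        ((hwm_cont.mono hsub).const_smul (lam * um1)))
    · intro x hx
      rw [interior_Icc] at hx
      have hx01 : x ∈ Ioo (0:ℝ) 1 := ⟨hx.1, lt_trans hx.2 hq1⟩
      have hdwp := hwp_diff x hx01
      have hdwm := hwm_diff x hx01
      have hwm_nonneg : 0 ≤ deriv wm x :=
        deriv_nonneg_of_monotoneOn hx01 hwm_mono hdwm
      have hxδ : dist x 0 < δ := by
        rw [Real.dist_eq, sub_zero, abs_of_pos hx.1]
        have : x < δ/2 := lt_of_lt_of_le hx.2 (min_le_left _ _)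
        linarith
      have hratio := hδ hxδ hx.1
      have hwm_pos : 0 < deriv wm x := by
        rcases lt_or_eq_of_le hwm_nonneg with h | h
        · exact h
        · exfalso; rw [← h, div_zero] at hratio; linarith
      have hge : c * deriv wm x ≤ deriv wp x := by
        rw [le_div_iff₀ hwm_pos] at hratio; linarith [hratio]
      have hderiv : deriv f x = up1 * deriv wp x - lam * um1 * deriv wm x := by
        rw [hf]
        rw [deriv_fun_sub ((hdwp.const_mul up1)) ((hdwm.const_mul (lam * um1))),
          deriv_const_mul _ hdwp, deriv_const_mul _ hdwm]
      rw [hderiv]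
      have hkey : lam * um1 / up1 < c := hc
      have : lam * um1 < c * up1 := by
        rw [div_lt_iff₀ hup] at hkey; linarith
      nlinarith [mul_le_mul_of_nonneg_left hge (le_of_lt hup)]
  have h0 : f 0 = 0 := by simp [hf, hwp0, hwm0]
  have := key ⟨le_rfl, le_of_lt hq0⟩ ⟨le_of_lt hq0, le_rfl⟩ hq0
  rw [h0] at this
  exact this
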